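/- Let K be a field of characteristic p > 0 and let f ∈ K⟦X⟧ be the formal power series whose coefficient at X^{p^i} is a_i for each i ≥ 0 (where a : ℕ → K) and whose coefficients at all other exponents vanish. Assume f is algebraic over the polynomial ring K[X]. Then there exist natural numbers N and n and elements c_0,…,c_n ∈ K, not all zero, such that c_0·a_i^{p^n} + c_1·a_{i+1}^{p^{n-1}} + ⋯ + c_n·a_{i+n} = 0 for every i ≥ N. -/

import Mathlib

private lemma coeff_pow_p_aux {K : Type*} [Field K] {p : ℕ} [Fact p.Prime] [CharP K p]
    (g : PowerSeries K) (m : ℕ) :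
    PowerSeries.coeff m (g ^ p) =
      if p ∣ m then (PowerSeries.coeff (m / p) g) ^ p else 0 := by
  classical
  haveI : CharP (PowerSeries K) p :=
    charP_of_injective_ringHom (PowerSeries.C_injective (R := K)) p
  have hp : 0 < p := (Fact.out : p.Prime).pos
  set t := PowerSeries.trunc (m + 1) g with ht
  have hsplit : g ^ p = (t : PowerSeries K) ^ p + (g - (t : PowerSeries K)) ^ p := by
    have h := add_pow_char (R := PowerSeries K) (t : PowerSeries K) (g - (t : PowerSeries K)) p
    rw [add_sub_cancel] at h
    exact h
  have hr : ∀ k ≤ m, PowerSeries.coeff k (g - (t : PowerSeries K)) = 0 := by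
    intro k hk
    simp [ht, Polynomial.coeff_coe, PowerSeries.coeff_trunc, Nat.lt_succ_of_le hk]
  have hrp : PowerSeries.coeff m ((g - (t : PowerSeries K)) ^ p) = 0 := by
    have hpow : (g - (t : PowerSeries K)) ^ p
        = (g - (t : PowerSeries K)) * (g - (t : PowerSeries K)) ^ (p - 1) := by
      conv_lhs => rw [show p = 1 + (p - 1) by omega]
      rw [pow_add, pow_one]
    rw [hpow, PowerSeries.coeff_mul]
    apply Finset.sum_eq_zero
    intro b hb
    rw [Finset.HasAntidiagonal.mem_antidiagonal] at hb
    rw [hr b.1 (by omega), zero_mul]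
  have htp : PowerSeries.coeff m ((t : PowerSeries K) ^ p)
      = if p ∣ m then (PowerSeries.coeff (m / p) g) ^ p else 0 := by
    rw [← Polynomial.coe_pow, Polynomial.coeff_coe]
    rw [← Polynomial.map_frobenius_expand p t, Polynomial.coeff_map, Polynomial.coeff_expand hp]
    rw [frobenius_def]
    split_ifs with h
    · congr 1
      rw [ht, PowerSeries.coeff_trunc]
      rw [if_pos (by have := Nat.div_le_self m p; omega)]
    · exact zero_pow (by omega)
  rw [hsplit, map_add, hrp, add_zero, htp]

private lemma coeff_pow_pj_aux {K : Type*} [Field K] {p : ℕ} [Fact p.Prime] [CharP K p]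
    (g : PowerSeries K) (j m : ℕ) :
    PowerSeries.coeff m (g ^ p ^ j) =
      if p ^ j ∣ m then (PowerSeries.coeff (m / p ^ j) g) ^ p ^ j else 0 := by
  induction j generalizing m with
  | zero => simp
  | succ j ih =>
    have hp : 0 < p := (Fact.out : p.Prime).pos
    have hgp : g ^ p ^ (j + 1) = (g ^ p ^ j) ^ p := by
      rw [← pow_mul, pow_succ]
    rw [hgp, coeff_pow_p_aux]
    by_cases h1 : p ∣ m
    · rw [if_pos h1, ih]
      by_cases h2 : p ^ j ∣ m / p
      · obtain ⟨d, hd⟩ := h2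
        have hm : m = p * (m / p) := (Nat.mul_div_cancel' h1).symm
        have hdvd : p ^ (j + 1) ∣ m :=
          ⟨d, by rw [hm, hd, pow_succ]; ring⟩
        rw [if_pos ⟨d, hd⟩, if_pos hdvd, ← pow_mul, ← pow_succ]
        congr 2
        rw [Nat.div_div_eq_div_mul, ← pow_succ']
      · rw [if_neg h2, if_neg, zero_pow (by omega)]
        intro hcon
        apply h2
        obtain ⟨d, hd⟩ := hcon
        refine ⟨d, ?_⟩
        rw [hd, pow_succ', mul_assoc, Nat.mul_div_cancel_left _ hp]
    · rw [if_neg h1, if_neg]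
      intro hcon
      exact h1 (dvd_trans (dvd_pow_self p (Nat.succ_ne_zero j)) hcon)

attribute [local instance] RatFunc.liftAlgebra

set_option maxHeartbeats 1000000 in
set_option synthInstance.maxHeartbeats 1000000 in
/-- Let `K` be a field of characteristic `p > 0` and let `f ∈ K⟦X⟧` be the
power series whose coefficient at `X^{p^i}` is `a i` and whose other coefficients vanish.
If `f` is algebraic over the polynomial ring `K[X]`, then there are `N`, `n` and elements
`c 0, …, c n ∈ K`, not all zero, such that
`c 0 · a_i^{p^n} + c 1 · a_{i+1}^{p^{n-1}} + ⋯ + c n · a_{i+n} = 0` for all `i ≥ N`. -/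
theorem statement1 {K : Type*} [Field K] {p : ℕ} [Fact p.Prime] [CharP K p]
    (a : ℕ → K) (f : PowerSeries K)
    (hcoeff : ∀ i : ℕ, PowerSeries.coeff (p ^ i) f = a i)
    (hcoeff' : ∀ m : ℕ, (∀ i : ℕ, m ≠ p ^ i) → PowerSeries.coeff m f = 0)
    (halg : ∃ Q : Polynomial (Polynomial K), Q ≠ 0 ∧
      Polynomial.eval₂ Polynomial.coeToPowerSeries.ringHom f Q = 0) :
    ∃ (N n : ℕ) (c : Fin (n + 1) → K), (∃ j, c j ≠ 0) ∧
      ∀ i : ℕ, N ≤ i →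
        ∑ j : Fin (n + 1), c j * (a (i + (j : ℕ))) ^ p ^ (n - (j : ℕ)) = 0 := by
  classical
  have hp1 : 1 < p := (Fact.out : p.Prime).one_lt
  obtain ⟨Q, hQ0, hQf⟩ := halg
  have key : ∀ P : Polynomial K, HahnSeries.ofPowerSeries ℤ K (P : PowerSeries K)
      = algebraMap (RatFunc K) (LaurentSeries K) (algebraMap (Polynomial K) (RatFunc K) P) := fun P => by
    rw [RatFunc.coe_coe]; rfl
  obtain ⟨f', hf'def⟩ : ∃ f' : LaurentSeries K, f' = HahnSeries.ofPowerSeries ℤ K f := ⟨_, rfl⟩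
  -- `f'` is algebraic over `F = RatFunc K`
  have halg' : IsAlgebraic (RatFunc K) f' := by
    refine ⟨Q.map (algebraMap (Polynomial K) (RatFunc K)),
      (Polynomial.map_ne_zero_iff (IsFractionRing.injective (Polynomial K) (RatFunc K))).mpr hQ0, ?_⟩
    rw [Polynomial.aeval_def, Polynomial.eval₂_map]
    have hcomp : (algebraMap (RatFunc K) (LaurentSeries K)).comp (algebraMap (Polynomial K) (RatFunc K))
        = (HahnSeries.ofPowerSeries ℤ K).comp Polynomial.coeToPowerSeries.ringHom :=
      RingHom.ext fun P => (key P).symm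
    rw [hcomp, hf'def]
    have := Polynomial.hom_eval₂ Q Polynomial.coeToPowerSeries.ringHom
      (HahnSeries.ofPowerSeries ℤ K) f
    rw [← this, hQf, map_zero]
  have hint : IsIntegral (RatFunc K) f' := halg'.isIntegral
  obtain ⟨n, hn⟩ : ∃ n, n = (minpoly (RatFunc K) f').natDegree := ⟨_, rfl⟩
  have hd0 : 0 < n := hn ▸ minpoly.natDegree_pos hint
  set W : Submodule (RatFunc K) (LaurentSeries K) :=
    Submodule.span (RatFunc K) (Set.range fun k : Fin n => f' ^ (k : ℕ)) with hWdef
  have hgen : ∀ k : ℕ, k < n → f' ^ k ∈ W := fun k hk =>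
    Submodule.subset_span ⟨⟨k, hk⟩, rfl⟩
  have hfd : f' ^ n ∈ W := by
    have h0 := minpoly.aeval (RatFunc K) f'
    rw [Polynomial.aeval_eq_sum_range, ← hn, Finset.sum_range_succ] at h0
    have hlead : (minpoly (RatFunc K) f').coeff n = 1 := by
      rw [hn]; exact (minpoly.monic hint).coeff_natDegree
    rw [hlead] at h0
    simp only [Algebra.smul_def, map_one, one_mul] at h0
    have h2 : f' ^ n = -∑ i ∈ Finset.range n,
        algebraMap (RatFunc K) (LaurentSeries K) ((minpoly (RatFunc K) f').coeff i) * f' ^ i :=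
      eq_neg_of_add_eq_zero_right h0
    rw [h2]
    refine neg_mem (Submodule.sum_mem _ fun i hi => ?_)
    rw [← Algebra.smul_def]
    exact Submodule.smul_mem _ _ (hgen i (Finset.mem_range.mp hi))
  have hmul : ∀ w ∈ W, f' * w ∈ W := by
    intro w hw
    refine Submodule.span_induction ?_ ?_ ?_ ?_ hw
    · rintro x ⟨k, rfl⟩
      rw [← pow_succ']
      rcases lt_or_eq_of_le (Nat.succ_le_of_lt k.isLt) with h | h
      · exact hgen _ h
      · have h' : (k : ℕ) + 1 = n := h
        rw [h']; exact hfd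
    · rw [mul_zero]; exact Submodule.zero_mem W
    · intro x y _ _ hx hy; rw [mul_add]; exact add_mem hx hy
    · intro c x _ hx; rw [Algebra.mul_smul_comm]; exact Submodule.smul_mem _ _ hx
  have hpowW : ∀ m : ℕ, f' ^ m ∈ W := by
    intro m
    induction m with
    | zero => exact hgen 0 hd0
    | succ m ih => rw [pow_succ']; exact hmul _ ih
  set v : Fin (n + 1) → W := fun j => ⟨f' ^ p ^ (j : ℕ), hpowW _⟩ with hv
  haveI : FiniteDimensional (RatFunc K) W :=
    FiniteDimensional.span_of_finite _ (Set.finite_range _)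
  have hdep : ¬ LinearIndependent (RatFunc K) v := by
    intro h
    have h1 := h.fintype_card_le_finrank
    have h2 : Module.finrank (RatFunc K) W ≤ n := by
      simpa [Set.finrank] using
        finrank_range_le_card (R := RatFunc K) (fun k : Fin n => f' ^ (k : ℕ))
    rw [Fintype.card_fin] at h1
    omega
  obtain ⟨r, hr, j0, hj0⟩ := Fintype.not_linearIndependent_iff.mp hdep
  have hrL : ∑ j : Fin (n + 1), algebraMap (RatFunc K) (LaurentSeries K) (r j) * f' ^ p ^ (j : ℕ) = 0 := by
    have h2 : ((∑ j : Fin (n + 1), r j • v j : W) : LaurentSeries K) = 0 := by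
      rw [hr]; rfl
    rw [AddSubmonoidClass.coe_finset_sum] at h2
    simpa [hv, Algebra.smul_def] using h2
  -- clear denominators
  set q : Fin (n + 1) → Polynomial K := fun j =>
    (r j).num * ∏ k ∈ Finset.univ.erase j, (r k).denom with hqdef
  set Dq : Polynomial K := ∏ k : Fin (n + 1), (r k).denom with hDq
  have hq : ∀ j, algebraMap (Polynomial K) (RatFunc K) (q j) = r j * algebraMap (Polynomial K) (RatFunc K) Dq := by
    intro j
    have hd : algebraMap (Polynomial K) (RatFunc K) (r j).denom ≠ 0 :=
      RatFunc.algebraMap_ne_zero (RatFunc.denom_ne_zero (r j))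
    have hnum : algebraMap (Polynomial K) (RatFunc K) (r j).num
        = r j * algebraMap (Polynomial K) (RatFunc K) (r j).denom :=
      (div_eq_iff hd).mp (RatFunc.num_div_denom (r j))
    have h1 : Dq = (r j).denom * ∏ k ∈ Finset.univ.erase j, (r k).denom :=
      (Finset.mul_prod_erase _ _ (Finset.mem_univ j)).symm
    rw [hqdef]
    simp only [map_mul, hnum, h1]
    ring
  have hqj0 : q j0 ≠ 0 := mul_ne_zero (RatFunc.num_ne_zero hj0)
    (Finset.prod_ne_zero_iff.mpr fun k _ => RatFunc.denom_ne_zero _)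
  -- the relation in K⟦X⟧
  have hsum0 : ∑ j : Fin (n + 1), ((q j : PowerSeries K) * f ^ p ^ (j : ℕ)) = 0 := by
    apply HahnSeries.ofPowerSeries_injective (Γ := ℤ) (R := K)
    rw [map_zero, map_sum]
    have hterm : ∀ j : Fin (n + 1),
        HahnSeries.ofPowerSeries ℤ K ((q j : PowerSeries K) * f ^ p ^ (j : ℕ))
          = algebraMap (RatFunc K) (LaurentSeries K) (algebraMap (Polynomial K) (RatFunc K) Dq)
              * (algebraMap (RatFunc K) (LaurentSeries K) (r j) * f' ^ p ^ (j : ℕ)) := by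
      intro j
      rw [map_mul, map_pow, key, hq, map_mul, ← hf'def]
      ring
    rw [Finset.sum_congr rfl fun j _ => hterm j, ← Finset.mul_sum, hrL, mul_zero]
  -- coefficients of f ^ (p ^ j)
  have hfpj : ∀ j i : ℕ, PowerSeries.coeff (p ^ (i + j)) (f ^ p ^ j) = a i ^ p ^ j := by
    intro j i
    rw [coeff_pow_pj_aux, if_pos (pow_dvd_pow p (Nat.le_add_left j i))]
    rw [Nat.pow_div (Nat.le_add_left j i) (by omega), Nat.add_sub_cancel, hcoeff]
  have hfpj0 : ∀ j l : ℕ, (∀ i, l ≠ p ^ (i + j)) →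
      PowerSeries.coeff l (f ^ p ^ j) = 0 := by
    intro j l hl
    rw [coeff_pow_pj_aux]
    split_ifs with h
    · rcases eq_or_ne (PowerSeries.coeff (l / p ^ j) f) 0 with h0 | h0
      · rw [h0, zero_pow (by positivity)]
      · exfalso
        by_cases hpow : ∀ i, l / p ^ j ≠ p ^ i
        · exact h0 (hcoeff' _ hpow)
        · push_neg at hpow
          obtain ⟨i, hi⟩ := hpow
          exact hl i (by rw [← Nat.div_mul_cancel h, hi, ← pow_add])
    · rfl
  -- extract smallest index with nonzero coefficient
  have hex : ∃ k, ∃ j, (q j).coeff k ≠ 0 :=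
    ⟨(q j0).natDegree, j0, fun h => hqj0 (Polynomial.leadingCoeff_eq_zero.mp h)⟩
  set k0 := Nat.find hex with hk0
  obtain ⟨jm, hjm⟩ := Nat.find_spec hex
  have hmin : ∀ k < k0, ∀ j, (q j).coeff k = 0 := by
    intro k hk j
    by_contra h
    exact Nat.find_min hex hk ⟨j, h⟩
  set Dg := Finset.univ.sup (fun j : Fin (n + 1) => (q j).natDegree) with hDg
  refine ⟨Dg + 2, n, fun j => (q j.rev).coeff k0, ⟨jm.rev, by simpa [Fin.rev_rev] using hjm⟩, ?_⟩
  intro i hi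
  set s := i + n with hs
  have hs2 : 2 ≤ s := by omega
  have hDs : Dg < p ^ (s - 1) := by
    calc Dg < 2 ^ Dg := Nat.lt_two_pow_self (n := Dg)
    _ ≤ 2 ^ (s - 1) := Nat.pow_le_pow_right (by omega) (by omega)
    _ ≤ p ^ (s - 1) := Nat.pow_le_pow_left (by omega) _
  have h2p : 2 * p ^ (s - 1) ≤ p ^ s := by
    calc 2 * p ^ (s - 1) ≤ p * p ^ (s - 1) := Nat.mul_le_mul_right _ (by omega)
    _ = p ^ s := by rw [← pow_succ']; congr 1; omega
  -- each term of the product at the key coefficient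
  have hterm : ∀ j : Fin (n + 1),
      PowerSeries.coeff (k0 + p ^ s) ((q j : PowerSeries K) * f ^ p ^ (j : ℕ))
        = (q j).coeff k0 * a (s - (j : ℕ)) ^ p ^ (j : ℕ) := by
    intro j
    have hjn : (j : ℕ) ≤ n := Nat.lt_succ_iff.mp j.isLt
    rw [PowerSeries.coeff_mul]
    rw [Finset.sum_eq_single (k0, p ^ s)]
    · rw [Polynomial.coeff_coe]
      congr 1
      have h5 : s - (j : ℕ) + (j : ℕ) = s := by omega
      have := hfpj (j : ℕ) (s - (j : ℕ))
      rw [h5] at this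
      exact this
    · intro b hb hne
      rw [Finset.HasAntidiagonal.mem_antidiagonal] at hb
      rcases eq_or_ne ((q j).coeff b.1) 0 with h | h
      · rw [Polynomial.coeff_coe, h, zero_mul]
      · have hk0le : k0 ≤ b.1 := by
          by_contra hlt
          exact h (hmin b.1 (by omega) j)
        have hbD : b.1 ≤ Dg := by
          rw [hDg]
          exact le_trans (Polynomial.le_natDegree_of_ne_zero h)
            (Finset.le_sup (f := fun j : Fin (n + 1) => (q j).natDegree) (Finset.mem_univ j))
        have hzero : PowerSeries.coeff b.2 (f ^ p ^ (j : ℕ)) = 0 := by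
          apply hfpj0
          intro i' hcon
          have hA : p ^ (s - 1) < p ^ (i' + (j : ℕ)) := by omega
          have hB : p ^ (i' + (j : ℕ)) ≤ p ^ s := by omega
          have h6 : i' + (j : ℕ) ≤ s := (Nat.pow_le_pow_iff_right hp1).mp hB
          have h7 : s - 1 < i' + (j : ℕ) := (Nat.pow_lt_pow_iff_right hp1).mp hA
          have h8 : i' + (j : ℕ) = s := by omega
          rw [h8] at hcon
          apply hne
          have : b.1 = k0 := by omega
          exact Prod.ext this (by omega)
        rw [hzero, mul_zero]
    · intro hnm
      simp [Finset.mem_antidiagonal] at hnm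
  have h0 : ∑ j : Fin (n + 1), (q j).coeff k0 * a (s - (j : ℕ)) ^ p ^ (j : ℕ) = 0 := by
    have := congrArg (PowerSeries.coeff (k0 + p ^ s)) hsum0
    rw [map_sum, map_zero] at this
    rw [← this]
    exact Finset.sum_congr rfl fun j _ => (hterm j).symm
  rw [← h0]
  refine Fintype.sum_bijective Fin.rev Fin.rev_bijective _ _ ?_
  intro x
  have hx : (x : ℕ) ≤ n := Nat.lt_succ_iff.mp x.isLt
  have hxr : (x.rev : ℕ) = n - (x : ℕ) := by
    rw [Fin.val_rev]; omega
  rw [hxr, show s - (n - (x : ℕ)) = i + (x : ℕ) by omega]
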